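/- On the polynomial semiring 𝕋[x,y] over the tropical semiring, the congruence generated by the single relation x ∼ y does not relate any nonzero element to the additive identity ∞; that is, if f ∼ ∞ under this congruence then f = ∞. Consequently, congruences on 𝕋[x,y] are not determined by their associated ideals. -/

import Mathlib

/-- The congruence on `𝕋[x,y]` generated by the single relation `x ∼ y`, where
`𝕋 = (ℝ ∪ {∞}, min, +)` is the tropical semiring and `𝕋[x,y]` is modelled as
`MvPolynomial (Fin 2) (Tropical (WithTop ℝ))`. -/
noncomputable def xySymCon : RingCon (MvPolynomial (Fin 2) (Tropical (WithTop ℝ))) :=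
  ringConGen (fun a b => a = MvPolynomial.X 0 ∧ b = MvPolynomial.X 1)

/-- The congruence on `𝕋[x,y]` given by equality after evaluating at `(1,1)`. -/
noncomputable def evalCon : RingCon (MvPolynomial (Fin 2) (Tropical (WithTop ℝ))) where
  r f g := MvPolynomial.eval (fun _ => 1) f = MvPolynomial.eval (fun _ => 1) g
  iseqv := ⟨fun _ => rfl, Eq.symm, Eq.trans⟩
  mul' h1 h2 := by simp only [map_mul]; exact congrArg₂ (· * ·) h1 h2
  add' h1 h2 := by simp only [map_add]; exact congrArg₂ (· + ·) h1 h2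

lemma tropical_sum_eq_zero {σ : Type*} (s : Finset σ) (g : σ → Tropical (WithTop ℝ))
    (h : ∑ i ∈ s, g i = 0) : ∀ i ∈ s, g i = 0 := by
  classical
  induction s using Finset.induction_on with
  | empty => simp
  | insert _ _ hx ih =>
    rw [Finset.sum_insert hx, Tropical.add_eq_zero_iff] at h
    intro i hi
    rcases Finset.mem_insert.mp hi with rfl | hi
    · exact h.1
    · exact ih h.2 i hi

/-- On `𝕋[x,y]`, the congruence generated by `x ∼ y` relates no nonzero element to the
additive identity `∞` (the zero of the polynomial semiring): if `f ∼ ∞` then `f = ∞`.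
Moreover the congruence is nontrivial (it relates `x` and `y`, which are distinct), so
congruences on `𝕋[x,y]` are not determined by their associated ideals. -/
theorem xySymCon_trivial_ideal :
    (∀ f : MvPolynomial (Fin 2) (Tropical (WithTop ℝ)), xySymCon f 0 → f = 0) ∧
    xySymCon (MvPolynomial.X 0) (MvPolynomial.X 1) ∧
    (MvPolynomial.X 0 : MvPolynomial (Fin 2) (Tropical (WithTop ℝ))) ≠ MvPolynomial.X 1 := by
  refine ⟨?_, ?_, ?_⟩
  · intro f hf
    have hle : xySymCon ≤ evalCon := by
      apply RingCon.ringConGen_le.mpr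
      rintro x y ⟨rfl, rfl⟩
      show MvPolynomial.eval _ _ = MvPolynomial.eval _ _
      simp
    have h : MvPolynomial.eval (fun _ => 1) f = 0 := by
      have h0 : MvPolynomial.eval (fun _ => 1) f = MvPolynomial.eval (fun _ => 1) 0 := hle hf
      simpa using h0
    rw [MvPolynomial.eval_eq] at h
    rw [← MvPolynomial.support_eq_empty, Finset.eq_empty_iff_forall_notMem]
    intro d hd
    have := tropical_sum_eq_zero _ _ h d hd
    simp only [one_pow, Finset.prod_const_one, mul_one] at this
    exact MvPolynomial.mem_support_iff.mp hd this
  · exact RingConGen.Rel.of _ _ ⟨rfl, rfl⟩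
  · exact fun h => absurd (MvPolynomial.X_injective h) (by decide)
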